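/- If F satisfies (S2) closure under subsets, (S3) closure under finite unions, (S4) {0} ∈ F, (A2) closure under sumsets, (A4) A ∈ F with A ⊆ G^{≥0} implies the set of all finite sums of elements of A is in F, and (A5) {g} ∈ F implies {−g} ∈ F, then the k-hull k((F)) is a subfield of k((G)). -/

import Mathlib

open scoped Pointwise

/-- If `F` satisfies (S2) closure under subsets, (S3) closure under finite
unions, (S4) `{0} ∈ F`, (A2) closure under sumsets, (A4) for `A ∈ F` with `A ⊆ G^{≥0}` the
set of all finite sums of elements of `A` (the additive submonoid generated by `A`) is in
`F`, and (A5) `{g} ∈ F → {-g} ∈ F`, then the `k`-hull `k((F))` is a subfield of `k((G))`. -/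
theorem khull_is_subfield
    {G : Type*} [AddCommGroup G] [LinearOrder G] [IsOrderedAddMonoid G] {k : Type*} [Field k]
    (F : Set (Set G)) (hWF : ∀ A ∈ F, A.IsWF)
    (hS2 : ∀ A ∈ F, ∀ B ⊆ A, B ∈ F)
    (hS3 : ∀ A ∈ F, ∀ B ∈ F, A ∪ B ∈ F)
    (hS4 : ({0} : Set G) ∈ F)
    (hA2 : ∀ A ∈ F, ∀ B ∈ F, A + B ∈ F)
    (hA4 : ∀ A ∈ F, A ⊆ {g : G | 0 ≤ g} → (AddSubmonoid.closure A : Set G) ∈ F)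
    (hA5 : ∀ g : G, ({g} : Set G) ∈ F → ({-g} : Set G) ∈ F) :
    ∃ K : Subfield (HahnSeries G k),
      (K : Set (HahnSeries G k)) = {a : HahnSeries G k | a.support ∈ F} := by
  have hempty : (∅ : Set G) ∈ F := hS2 _ hS4 _ (Set.empty_subset _)
  refine ⟨{
    carrier := {a : HahnSeries G k | a.support ∈ F}
    zero_mem' := by simp [HahnSeries.support_zero, hempty]
    one_mem' := by simp [HahnSeries.support_one, hS4]
    add_mem' := by
      intro a b ha hb
      exact hS2 _ (hS3 _ ha _ hb) _ (HahnSeries.support_add_subset _ _)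
    neg_mem' := by
      intro a ha
      simpa [HahnSeries.support_neg] using ha
    mul_mem' := by
      intro a b ha hb
      exact hS2 _ (hA2 _ ha _ hb) _ HahnSeries.support_mul_subset
    inv_mem' := by
      intro a ha
      by_cases h0 : a = 0
      · simpa [h0] using hempty
      -- setup
      set g := a.order with hg
      set c := a.leadingCoeff with hc
      have hc0 : c ≠ 0 := HahnSeries.leadingCoeff_ne_zero.mpr h0
      have hu := HahnSeries.unit_aux a (inv_mul_cancel₀ hc0) (-g) (neg_add_cancel g)
      set u : HahnSeries G k := 1 - HahnSeries.single (-g) c⁻¹ * a with hudef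
      have hgF : ({-g} : Set G) ∈ F := by
        refine hA5 _ (hS2 _ ha _ ?_)
        simpa [Set.singleton_subset_iff, HahnSeries.mem_support] using (by rw [hg]; exact HahnSeries.coeff_order_eq_zero.not.mpr h0 : a.coeff g ≠ 0)
      have hsF : ({-g} : Set G) + a.support ∈ F := hA2 _ hgF _ ha
      have huF : u.support ∈ F := by
        refine hS2 _ (hS3 _ hS4 _ hsF) _ ?_
        intro x hx
        have := HahnSeries.support_add_subset (x := (1 : HahnSeries G k))
          (y := -(HahnSeries.single (-g) c⁻¹ * a)) (by simpa [hudef, sub_eq_add_neg] using hx)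
        rcases this with h | h
        · exact Or.inl (by simpa using HahnSeries.support_one.le h)
        · rw [HahnSeries.support_neg] at h
          exact Or.inr (HahnSeries.support_mul_subset.trans
            (Set.add_subset_add_right HahnSeries.support_single_subset) h)
      have hupos : u.support ⊆ {x : G | 0 ≤ x} := by
        intro x hx
        have := HahnSeries.orderTop_le_of_coeff_ne_zero hx
        have : (0 : WithTop G) < (x : WithTop G) := lt_of_lt_of_le hu this
        exact le_of_lt (by exact_mod_cast this)
      have hclF : (AddSubmonoid.closure u.support : Set G) ∈ F := hA4 _ huF hupos
      -- the inverse
      have hinv : a⁻¹ = HahnSeries.single (-g) c⁻¹ *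
          (HahnSeries.SummableFamily.powers u).hsum := by
        refine inv_eq_of_mul_eq_one_right ?_
        have h1 := HahnSeries.SummableFamily.one_sub_self_mul_hsum_powers hu
        rw [show (1 : HahnSeries G k) - u = HahnSeries.single (-g) c⁻¹ * a from by
          rw [hudef, sub_sub_cancel]] at h1
        rw [← mul_assoc, mul_comm a, h1]
      have hpow : ∀ n : ℕ, (u ^ n).support ⊆ (AddSubmonoid.closure u.support : Set G) := by
        intro n
        induction n with
        | zero =>
          intro x hx
          simp only [pow_zero] at hx
          rw [HahnSeries.support_one, Set.mem_singleton_iff] at hx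
          subst hx
          exact SetLike.mem_coe.mpr (zero_mem _)
        | succ n ih =>
          intro x hx
          obtain ⟨i, hi, j, hj, rfl⟩ := HahnSeries.support_mul_subset hx
          exact SetLike.mem_coe.mpr (add_mem (SetLike.mem_coe.mp (ih hi))
            (AddSubmonoid.subset_closure hj))
      have hsupp : a⁻¹.support ⊆ ({-g} : Set G) + (AddSubmonoid.closure u.support : Set G) := by
        rw [hinv]
        refine HahnSeries.support_mul_subset.trans ?_
        refine Set.add_subset_add HahnSeries.support_single_subset ?_
        refine HahnSeries.SummableFamily.support_hsum_subset.trans ?_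
        refine Set.iUnion_subset fun n => ?_
        simpa [HahnSeries.SummableFamily.powers_of_orderTop_pos hu] using hpow n
      exact hS2 _ (hA2 _ hgF _ hclF) _ hsupp }, rfl⟩
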